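/- (Pointwise equality.) Let μ₁, μ₂ be sub-distributions over a countable set R. Suppose for every i ∈ R there exists an (ε, δᵢ)-approximate lifting of {(r₁,r₂) : r₁ = i → r₂ = i} relating μ₁ and μ₂, with δᵢ ≥ 0 and ∑_{i∈R} δᵢ = δ < ∞. Then there exists an (ε, δ)-approximate lifting of the equality relation relating μ₁ and μ₂. -/

import Mathlib

open scoped ENNReal

noncomputable section

/-- A discrete sub-distribution: total mass at most 1. -/
def IsSubDist {A : Type*} (μ : A → ℝ≥0∞) : Prop := ∑' a, μ a ≤ 1

/-- Mass of a set under `μ`. -/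
def setSum {A : Type*} (μ : A → ℝ≥0∞) (S : Set A) : ℝ≥0∞ := ∑' a : S, μ (a : A)

/-- `μ` is a coupling of `(μ₁, μ₂)`: a joint sub-distribution with the given marginals. -/
def IsCoupling {A₁ A₂ : Type*} (μ : A₁ × A₂ → ℝ≥0∞)
    (μ₁ : A₁ → ℝ≥0∞) (μ₂ : A₂ → ℝ≥0∞) : Prop :=
  IsSubDist μ ∧ (∀ a₁, ∑' a₂, μ (a₁, a₂) = μ₁ a₁) ∧ (∀ a₂, ∑' a₁, μ (a₁, a₂) = μ₂ a₂)

/-- Image of a set under a relation. -/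
def relImage {A₁ A₂ : Type*} (R : Set (A₁ × A₂)) (S : Set A₁) : Set A₂ :=
  {a₂ | ∃ a₁ ∈ S, (a₁, a₂) ∈ R}

/-- `R⋆ = R ∪ (A₁ × {⋆}) ∪ ({⋆} × A₂)`, with `⋆` modelled by `none`. -/
def starRel {A₁ A₂ : Type*} (R : Set (A₁ × A₂)) : Set (Option A₁ × Option A₂) :=
  {p | match p with
       | (some a₁, some a₂) => (a₁, a₂) ∈ R
       | (some _, none) => True
       | (none, some _) => True
       | (none, none) => False}

/-- `(ε, δ)`-approximate `R`-lifting of `(μ₁, μ₂)`, witnessed by two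
sub-distributions over `A₁⋆ × A₂⋆` with marginal, support, and ε-distance conditions. -/
def ApproxLift {A₁ A₂ : Type*} (ε δ : ℝ) (R : Set (A₁ × A₂))
    (μ₁ : A₁ → ℝ≥0∞) (μ₂ : A₂ → ℝ≥0∞) : Prop :=
  ∃ μL μR : Option A₁ × Option A₂ → ℝ≥0∞,
    IsSubDist μL ∧ IsSubDist μR ∧
    (∀ a₁, ∑' o, μL (some a₁, o) = μ₁ a₁) ∧ (∀ o, μL (none, o) = 0) ∧
    (∀ a₂, ∑' o, μR (o, some a₂) = μ₂ a₂) ∧ (∀ o, μR (o, none) = 0) ∧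
    {p | μL p ≠ 0} ⊆ starRel R ∧ {p | μR p ≠ 0} ⊆ starRel R ∧
    ∀ S : Set (Option A₁ × Option A₂),
      setSum μL S ≤ ENNReal.ofReal (Real.exp ε) * setSum μR S + ENNReal.ofReal δ


lemma my_tsum_option {A : Type*} (f : Option A → ℝ≥0∞) :
    ∑' o, f o = f none + ∑' a, f (some a) := by
  have hsplit : f = ({none} : Set (Option A)).indicator f
      + ({none} : Set (Option A))ᶜ.indicator f :=
    (Set.indicator_self_add_compl ({none} : Set (Option A)) f).symm
  nth_rewrite 1 [hsplit]
  simp only [Pi.add_apply]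
  rw [ENNReal.tsum_add]
  congr 1
  · rw [← tsum_subtype, tsum_singleton none f]
  · rw [← Function.Injective.tsum_eq (Option.some_injective A)
      (f := ({none} : Set (Option A))ᶜ.indicator f) ?_]
    · exact tsum_congr fun a => by simp
    · intro o ho
      rcases o with _ | a
      · simp [Function.mem_support] at ho
      · exact ⟨a, rfl⟩

/-- slice equivalence -/
def sliceEquiv {A₁ A₂ : Type*} (i : A₁) :
    A₂ ≃ {p : A₁ × A₂ // p.1 = i} where
  toFun o := ⟨(i, o), rfl⟩
  invFun p := p.1.2
  left_inv o := rfl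
  right_inv := fun ⟨⟨a, b⟩, h⟩ => by subst h; rfl

lemma setSum_slice {A₁ A₂ : Type*} (μ : A₁ × A₂ → ℝ≥0∞) (i : A₁) :
    setSum μ {p | p.1 = i} = ∑' o, μ (i, o) := by
  unfold setSum
  exact ((sliceEquiv (A₂ := A₂) i).tsum_eq fun p => μ (p : A₁ × A₂)).symm

lemma pointwise_bound {R : Type*} (μ₁ μ₂ : R → ℝ≥0∞) (ε δ : ℝ) (i : R)
    (hl : ApproxLift ε δ {p : R × R | p.1 = i → p.2 = i} μ₁ μ₂) :
    μ₁ i ≤ ENNReal.ofReal (Real.exp ε) * μ₂ i + ENNReal.ofReal δ := by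
  obtain ⟨μL, μR, _, _, hL1, hL0, hR2, hR0, hLs, hRs, hdist⟩ := hl
  have key := hdist {p | p.1 = some i}
  rw [setSum_slice μL (some i), setSum_slice μR (some i), hL1 i] at key
  refine key.trans (add_le_add_left (mul_le_mul_right ?_ _) _)
  rw [my_tsum_option (fun o => μR (some i, o)), hR0 (some i), zero_add]
  have hz : ∀ j, j ≠ i → μR (some i, some j) = 0 := by
    intro j hj
    by_contra hne
    have := hRs hne
    have h2 : (i, j) ∈ {p : R × R | p.1 = i → p.2 = i} := this
    exact hj (h2 rfl)
  rw [tsum_eq_single i (fun j hj => hz j hj)]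
  rw [← hR2 i]
  exact ENNReal.le_tsum (some i)

section Constr
variable {R : Type*} (μ₁ μ₂ : R → ℝ≥0∞) (e : ℝ≥0∞)

open Classical in
def mLd (μ₁ μ₂ : R → ℝ≥0∞) (e : ℝ≥0∞) : Option R × Option R → ℝ≥0∞
  | (some i, some j) => if j = i then min (μ₁ i) (e * μ₂ i) else 0
  | (some i, none) => μ₁ i - e * μ₂ i
  | (none, _) => 0

open Classical in
def mRd (μ₂ : R → ℝ≥0∞) : Option R × Option R → ℝ≥0∞
  | (some i, some j) => if j = i then μ₂ j else 0
  | _ => 0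

def nuD (δf : R → ℝ) : Option R × Option R → ℝ≥0∞
  | (some i, none) => ENNReal.ofReal (δf i)
  | _ => 0

lemma sub_add_min (a b : ℝ≥0∞) : a - b + min a b = a := by
  rcases le_total a b with h | h
  · rw [min_eq_left h, tsub_eq_zero_of_le h, zero_add]
  · rw [min_eq_right h, tsub_add_cancel_of_le h]

lemma mLd_marg (i : R) : ∑' o, mLd μ₁ μ₂ e (some i, o) = μ₁ i := by
  rw [my_tsum_option (fun o => mLd μ₁ μ₂ e (some i, o))]
  have h1 : (∑' j, mLd μ₁ μ₂ e (some i, some j)) = min (μ₁ i) (e * μ₂ i) := by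
    rw [tsum_eq_single i (fun j hj => by simp [mLd, hj])]
    simp [mLd]
  rw [h1]
  show μ₁ i - e * μ₂ i + min (μ₁ i) (e * μ₂ i) = μ₁ i
  exact sub_add_min _ _

lemma mRd_marg (j : R) : ∑' o, mRd μ₂ (o, some j) = μ₂ j := by
  rw [my_tsum_option (fun o => mRd μ₂ (o, some j))]
  have h1 : (∑' i, mRd μ₂ (some i, some j)) = μ₂ j := by
    rw [tsum_eq_single j (fun i hi => by simp only [mRd]; rw [if_neg (fun h => hi h.symm)])]
    simp [mRd]
  rw [h1]
  show (0 : ℝ≥0∞) + μ₂ j = μ₂ j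
  exact zero_add _

lemma mRd_left (i : R) : ∑' o, mRd μ₂ (some i, o) = μ₂ i := by
  rw [my_tsum_option (fun o => mRd μ₂ (some i, o))]
  have h1 : (∑' j, mRd μ₂ (some i, some j)) = μ₂ i := by
    rw [tsum_eq_single i (fun j hj => by simp [mRd, hj])]
    simp [mRd]
  rw [h1]
  show (0 : ℝ≥0∞) + μ₂ i = μ₂ i
  exact zero_add _

lemma mLd_total : ∑' p, mLd μ₁ μ₂ e p = ∑' i, μ₁ i := by
  rw [ENNReal.tsum_prod' (f := fun p => mLd μ₁ μ₂ e p),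
    my_tsum_option (fun a => ∑' b, mLd μ₁ μ₂ e (a, b))]
  have h0 : (∑' b, mLd μ₁ μ₂ e ((none : Option R), b)) = 0 := by simp [mLd]
  rw [h0, zero_add]
  exact tsum_congr fun i => mLd_marg μ₁ μ₂ e i

lemma mRd_total : ∑' p, mRd μ₂ p = ∑' i, μ₂ i := by
  rw [ENNReal.tsum_prod' (f := fun p => mRd μ₂ p),
    my_tsum_option (fun a => ∑' b, mRd μ₂ (a, b))]
  have h0 : (∑' b, mRd μ₂ ((none : Option R), b)) = 0 := by
    rw [show (fun b => mRd μ₂ ((none : Option R), b)) = fun _ => 0 from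
      funext fun b => by rcases b with _ | j <;> simp [mRd]]
    exact tsum_zero
  rw [h0, zero_add]
  exact tsum_congr fun i => mRd_left μ₂ i

lemma nuD_total (δf : R → ℝ) : ∑' p, nuD δf p = ∑' i, ENNReal.ofReal (δf i) := by
  have hinj : Function.Injective (fun i : R => ((some i, none) : Option R × Option R)) := by
    intro a b hab
    simpa using congrArg (fun p => p.1) hab
  have hsupp : Function.support (nuD δf) ⊆
      Set.range fun i : R => ((some i, none) : Option R × Option R) := by
    intro p hp
    rcases p with ⟨_ | i, _ | j⟩
    · simp [nuD, Function.mem_support] at hp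
    · simp [nuD, Function.mem_support] at hp
    · exact ⟨i, rfl⟩
    · simp [nuD, Function.mem_support] at hp
  rw [← Function.Injective.tsum_eq hinj hsupp]
  rfl

lemma mLd_pointwise_le (δf : R → ℝ)
    (hpt : ∀ i, μ₁ i ≤ e * μ₂ i + ENNReal.ofReal (δf i)) (p : Option R × Option R) :
    mLd μ₁ μ₂ e p ≤ e * mRd μ₂ p + nuD δf p := by
  rcases p with ⟨_ | i, _ | j⟩
  · simp [mLd]
  · simp [mLd]
  · -- (some i, none)
    show μ₁ i - e * μ₂ i ≤ e * mRd μ₂ (some i, none) + ENNReal.ofReal (δf i)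
    have : mRd μ₂ ((some i : Option R), (none : Option R)) = 0 := by simp [mRd]
    rw [this, mul_zero, zero_add]
    exact tsub_le_iff_right.mpr ((hpt i).trans_eq (add_comm _ _))
  · -- (some i, some j)
    by_cases hji : j = i
    · subst hji
      have hL : mLd μ₁ μ₂ e ((some j : Option R), (some j : Option R))
          = min (μ₁ j) (e * μ₂ j) := by simp [mLd]
      have hR : mRd μ₂ ((some j : Option R), (some j : Option R)) = μ₂ j := by simp [mRd]
      rw [hL, hR]
      exact le_add_right (min_le_right _ _)
    · have hL : mLd μ₁ μ₂ e ((some i : Option R), (some j : Option R)) = 0 := by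
        simp [mLd, hji]
      rw [hL]
      exact zero_le
end Constr

theorem pointwise_equality {R : Type*} [Countable R]
    (μ₁ μ₂ : R → ℝ≥0∞) (h₁ : IsSubDist μ₁) (h₂ : IsSubDist μ₂)
    (ε : ℝ) (δf : R → ℝ) (hδ : ∀ i, 0 ≤ δf i) (hs : Summable δf)
    (h : ∀ i : R, ApproxLift ε (δf i) {p : R × R | p.1 = i → p.2 = i} μ₁ μ₂) :
    ApproxLift ε (∑' i, δf i) {p : R × R | p.1 = p.2} μ₁ μ₂ := by
  classical
  set e := ENNReal.ofReal (Real.exp ε) with he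
  have hpt : ∀ i, μ₁ i ≤ e * μ₂ i + ENNReal.ofReal (δf i) :=
    fun i => pointwise_bound μ₁ μ₂ ε (δf i) i (h i)
  refine ⟨mLd μ₁ μ₂ e, mRd μ₂, ?_, ?_, mLd_marg μ₁ μ₂ e, ?_, mRd_marg μ₂, ?_, ?_, ?_, ?_⟩
  · show ∑' p, mLd μ₁ μ₂ e p ≤ 1
    rw [mLd_total]; exact h₁
  · show ∑' p, mRd μ₂ p ≤ 1
    rw [mRd_total]; exact h₂
  · intro o; simp [mLd]
  · intro o; rcases o with _ | i <;> simp [mRd]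
  · -- support of mLd
    rintro ⟨_ | i, _ | j⟩ hp
    · simp [mLd] at hp
    · simp [mLd] at hp
    · exact trivial
    · by_cases hji : j = i
      · subst hji; exact rfl
      · exfalso; simp [mLd, hji] at hp
  · -- support of mRd
    rintro ⟨_ | i, _ | j⟩ hp
    · simp [mRd] at hp
    · simp [mRd] at hp
    · simp [mRd] at hp
    · by_cases hji : j = i
      · subst hji; exact rfl
      · exfalso; simp [mRd, hji] at hp
  · intro S
    have step1 : setSum (mLd μ₁ μ₂ e) S ≤ ∑' p : S, (e * mRd μ₂ p + nuD δf p) :=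
      ENNReal.tsum_le_tsum fun p => mLd_pointwise_le μ₁ μ₂ e δf hpt p
    have step2 : (∑' p : S, (e * mRd μ₂ p + nuD δf p))
        = e * setSum (mRd μ₂) S + setSum (nuD δf) S := by
      rw [ENNReal.tsum_add, ENNReal.tsum_mul_left]; rfl
    have step3 : setSum (nuD δf) S ≤ ENNReal.ofReal (∑' i, δf i) := by
      have h1 : setSum (nuD δf) S ≤ ∑' p, nuD δf p := by
        rw [setSum, tsum_subtype]
        exact ENNReal.tsum_le_tsum fun p => Set.indicator_le_self S (nuD δf) p
      rw [ENNReal.ofReal_tsum_of_nonneg hδ hs]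
      calc setSum (nuD δf) S ≤ ∑' p, nuD δf p := h1
        _ = ∑' i, ENNReal.ofReal (δf i) := nuD_total δf
    calc setSum (mLd μ₁ μ₂ e) S ≤ e * setSum (mRd μ₂) S + setSum (nuD δf) S := by
          rw [← step2]; exact step1
      _ ≤ e * setSum (mRd μ₂) S + ENNReal.ofReal (∑' i, δf i) := add_le_add_right step3 _
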